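/- Define f(t) = −(1/2)·ln((5 + 4cos t)/9) for t with cos t > −1/2 and f(t) = −(1/2)·ln((2 − 2cos t)/9) for t with cos t < −1/2, extended by continuity to t = 2π/3 (where both formulas give the value (1/2)·ln 3). Then f is continuous at t = 2π/3 but not differentiable there: its left derivative at 2π/3 equals √3/3 while its right derivative equals −√3/6. Hence the dynamical quantum phase transition of the periodic 3-state Potts chain at t_c = 2π/3 is first order (a slope discontinuity of the rate function). -/

import Mathlib

open Complex Real

/-- The thermodynamic-limit Loschmidt rate function per bond of the periodic
3-state Potts chain: `f(t) = ln 3 − ln max(|e^{it}+2|, |e^{it}−1|)`, which is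
the continuous extension of the two piecewise formulas. -/
noncomputable def pottsRate (t : ℝ) : ℝ :=
  Real.log 3 -
    Real.log (max (‖Complex.exp (t * I) + 2‖)
                  (‖Complex.exp (t * I) - 1‖))

lemma abs1 (t : ℝ) :
    ‖Complex.exp (t * I) + 2‖ = Real.sqrt (5 + 4 * Real.cos t) := by
  rw [Complex.norm_def, Complex.normSq_apply]
  simp [Complex.exp_ofReal_mul_I_re, Complex.exp_ofReal_mul_I_im]
  congr 1
  nlinarith [Real.sin_sq_add_cos_sq t]

lemma abs2 (t : ℝ) :
    ‖Complex.exp (t * I) - 1‖ = Real.sqrt (2 - 2 * Real.cos t) := by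
  rw [Complex.norm_def, Complex.normSq_apply]
  simp [Complex.exp_ofReal_mul_I_re, Complex.exp_ofReal_mul_I_im]
  congr 1
  nlinarith [Real.sin_sq_add_cos_sq t]

lemma pos1 (t : ℝ) : (0:ℝ) < 5 + 4 * Real.cos t := by
  nlinarith [Real.neg_one_le_cos t]

lemma rate_left (t : ℝ) (h : -(1/2 : ℝ) ≤ Real.cos t) :
    pottsRate t = Real.log 3 - Real.log (5 + 4 * Real.cos t) / 2 := by
  have h1 : Real.sqrt (2 - 2 * Real.cos t) ≤ Real.sqrt (5 + 4 * Real.cos t) :=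
    Real.sqrt_le_sqrt (by linarith)
  rw [pottsRate, abs1, abs2, max_eq_left h1, Real.log_sqrt (pos1 t).le]

lemma rate_right (t : ℝ) (h : Real.cos t ≤ -(1/2 : ℝ)) :
    pottsRate t = Real.log 3 - Real.log (2 - 2 * Real.cos t) / 2 := by
  have h1 : Real.sqrt (5 + 4 * Real.cos t) ≤ Real.sqrt (2 - 2 * Real.cos t) :=
    Real.sqrt_le_sqrt (by linarith)
  rw [pottsRate, abs1, abs2, max_eq_right h1,
    Real.log_sqrt (by nlinarith [Real.cos_le_one t] : (0:ℝ) ≤ 2 - 2 * Real.cos t)]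

lemma log9 : Real.log 9 = 2 * Real.log 3 := by
  rw [show (9:ℝ) = 3 ^ 2 by norm_num, Real.log_pow]; ring

lemma cos23 : Real.cos (2 * π / 3) = -(1/2) := by
  rw [show (2 * π / 3 : ℝ) = π - π/3 by ring, Real.cos_pi_sub, Real.cos_pi_div_three]

lemma sin23 : Real.sin (2 * π / 3) = Real.sqrt 3 / 2 := by
  rw [show (2 * π / 3 : ℝ) = π - π/3 by ring, Real.sin_pi_sub, Real.sin_pi_div_three]

lemma deriv_left (t : ℝ) :
    HasDerivAt (fun s => Real.log 3 - Real.log (5 + 4 * Real.cos s) / 2)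
      (2 * Real.sin t / (5 + 4 * Real.cos t)) t := by
  have h1 : HasDerivAt (fun s : ℝ => 5 + 4 * Real.cos s) (4 * -Real.sin t) t :=
    ((Real.hasDerivAt_cos t).const_mul 4).const_add 5
  have h2 := (h1.log (pos1 t).ne')
  have h3 := (h2.div_const 2).const_sub (Real.log 3)
  refine h3.congr_deriv ?_
  field_simp [(pos1 t).ne']
  ring

lemma deriv_right (t : ℝ) (h : (0:ℝ) < 2 - 2 * Real.cos t) :
    HasDerivAt (fun s => Real.log 3 - Real.log (2 - 2 * Real.cos s) / 2)
      (-Real.sin t / (2 - 2 * Real.cos t)) t := by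
  have h1 : HasDerivAt (fun s : ℝ => 2 - 2 * Real.cos s) (2 * Real.sin t) t := by
    have := ((Real.hasDerivAt_cos t).const_mul 2).const_sub 2
    refine this.congr_deriv ?_
    ring
  have h3 := ((h1.log h.ne').div_const 2).const_sub (Real.log 3)
  refine h3.congr_deriv ?_
  field_simp [h.ne']

lemma cos_ge (t : ℝ) (h0 : 0 < t) (h1 : t ≤ 2 * π / 3) : -(1/2 : ℝ) ≤ Real.cos t := by
  rw [← cos23]
  exact Real.cos_le_cos_of_nonneg_of_le_pi h0.le (by linarith [Real.pi_pos]) h1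

lemma cos_le (t : ℝ) (h0 : 2 * π / 3 ≤ t) (h1 : t < π) : Real.cos t ≤ -(1/2 : ℝ) := by
  rw [← cos23]
  exact Real.cos_le_cos_of_nonneg_of_le_pi (by positivity) h1.le h0

/-- `f` agrees with the two piecewise formulas, takes the value `(1/2)·ln 3` at
`t = 2π/3`, is continuous there but not differentiable: the left derivative is
`√3/3` while the right derivative is `−√3/6`. The DQPT at `t_c = 2π/3` is thus
first order (slope discontinuity of the rate function). -/
theorem stmt_14 :
    (∀ t : ℝ, Real.cos t > -(1 / 2) →
      pottsRate t = -(1 / 2) * Real.log ((5 + 4 * Real.cos t) / 9)) ∧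
    (∀ t : ℝ, Real.cos t < -(1 / 2) →
      pottsRate t = -(1 / 2) * Real.log ((2 - 2 * Real.cos t) / 9)) ∧
    pottsRate (2 * π / 3) = (1 / 2) * Real.log 3 ∧
    ContinuousAt pottsRate (2 * π / 3) ∧
    HasDerivWithinAt pottsRate (Real.sqrt 3 / 3) (Set.Iic (2 * π / 3)) (2 * π / 3) ∧
    HasDerivWithinAt pottsRate (-(Real.sqrt 3) / 6) (Set.Ici (2 * π / 3)) (2 * π / 3) ∧
    ¬ DifferentiableAt ℝ pottsRate (2 * π / 3) := by
  have hπ := Real.pi_pos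
  have hc : Real.cos (2 * π / 3) = -(1/2) := cos23
  have hmem : Set.Ioo (0:ℝ) π ∈ nhds (2 * π / 3) :=
    Ioo_mem_nhds (by positivity) (by linarith)
  -- value at the critical point
  have hval : pottsRate (2 * π / 3) = (1 / 2) * Real.log 3 := by
    rw [rate_left _ (le_of_eq hc.symm), hc]
    norm_num
    ring
  -- left derivative
  have h5 : HasDerivWithinAt pottsRate (Real.sqrt 3 / 3)
      (Set.Iic (2 * π / 3)) (2 * π / 3) := by
    have hd := (deriv_left (2 * π / 3)).hasDerivWithinAt (s := Set.Iic (2 * π / 3))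
    rw [sin23, hc] at hd
    have hd' : HasDerivWithinAt (fun s => Real.log 3 - Real.log (5 + 4 * Real.cos s) / 2)
        (Real.sqrt 3 / 3) (Set.Iic (2 * π / 3)) (2 * π / 3) := by
      refine hd.congr_deriv ?_; norm_num; ring
    refine hd'.congr_of_eventuallyEq ?_ (rate_left _ (le_of_eq hc.symm))
    filter_upwards [nhdsWithin_le_nhds hmem, self_mem_nhdsWithin] with t ht ht2
    exact rate_left t (cos_ge t ht.1 ht2)
  -- right derivative
  have h6 : HasDerivWithinAt pottsRate (-(Real.sqrt 3) / 6)
      (Set.Ici (2 * π / 3)) (2 * π / 3) := by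
    have hpos : (0:ℝ) < 2 - 2 * Real.cos (2 * π / 3) := by rw [hc]; norm_num
    have hd := (deriv_right (2 * π / 3) hpos).hasDerivWithinAt (s := Set.Ici (2 * π / 3))
    rw [sin23, hc] at hd
    have hd' : HasDerivWithinAt (fun s => Real.log 3 - Real.log (2 - 2 * Real.cos s) / 2)
        (-(Real.sqrt 3) / 6) (Set.Ici (2 * π / 3)) (2 * π / 3) := by
      refine hd.congr_deriv ?_; norm_num; ring
    refine hd'.congr_of_eventuallyEq ?_ (rate_right _ (le_of_eq hc))
    filter_upwards [nhdsWithin_le_nhds hmem, self_mem_nhdsWithin] with t ht ht2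
    exact rate_right t (cos_le t ht2 ht.2)
  -- continuity
  have hcont : ContinuousAt pottsRate (2 * π / 3) := by
    have := h5.continuousWithinAt.union h6.continuousWithinAt
    rwa [Set.Iic_union_Ici, continuousWithinAt_univ] at this
  refine ⟨?_, ?_, hval, hcont, h5, h6, ?_⟩
  · intro t ht
    rw [rate_left t ht.le, Real.log_div (pos1 t).ne' (by norm_num), log9]
    ring
  · intro t ht
    have h2 : (0:ℝ) < 2 - 2 * Real.cos t := by linarith
    rw [rate_right t ht.le, Real.log_div h2.ne' (by norm_num), log9]
    ring
  · intro hd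
    have h := hd.hasDerivAt
    have u1 : UniqueDiffWithinAt ℝ (Set.Iic (2 * π / 3)) (2 * π / 3) :=
      uniqueDiffOn_Iic _ _ Set.self_mem_Iic
    have u2 : UniqueDiffWithinAt ℝ (Set.Ici (2 * π / 3)) (2 * π / 3) :=
      uniqueDiffOn_Ici _ _ Set.self_mem_Ici
    have e1 : Real.sqrt 3 / 3 = deriv pottsRate (2 * π / 3) := by
      rw [← h5.derivWithin u1, (h.hasDerivWithinAt).derivWithin u1]
    have e2 : -(Real.sqrt 3) / 6 = deriv pottsRate (2 * π / 3) := by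
      rw [← h6.derivWithin u2, (h.hasDerivWithinAt).derivWithin u2]
    have h3 : (0:ℝ) < Real.sqrt 3 := Real.sqrt_pos.mpr (by norm_num)
    rw [← e1] at e2
    nlinarith
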